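/- Let k ≥ 2 be an integer and set g₁ = 2^k − 1, g₂ = (2^k − 2)·(2^{k²} − 1)/(2^k − 1), and g₃ = (2^k − 1)·(2^{k²} − 1)/(2^k − 1). Then g₁, g₂, g₃ are all binary k'th powers, and gcd(g₁, g₂, g₃) = E_k = gcd(2^k − 1, k). -/

import Mathlib

/-- `ck k n = 1 + 2^n + 2^(2n) + ⋯ + 2^((k-1)n)`, i.e., `(2^(kn) - 1)/(2^n - 1)` for `n ≥ 1`. -/
def ck (k n : ℕ) : ℕ := ∑ i ∈ Finset.range k, 2 ^ (i * n)

/-- `m` is a binary `k`'th power: `m = a * ck k n` for some `n ≥ 1` and `2^(n-1) ≤ a < 2^n`. -/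
def IsBinaryKthPower (k m : ℕ) : Prop :=
  ∃ n a : ℕ, 1 ≤ n ∧ 2 ^ (n - 1) ≤ a ∧ a < 2 ^ n ∧ m = a * ck k n

lemma geom_nat (x m : ℕ) (hx : 1 ≤ x) :
    (x - 1) * ∑ i ∈ Finset.range m, x ^ i = x ^ m - 1 := by
  induction m with
  | zero => simp
  | succ m ih =>
    rw [Finset.sum_range_succ, Nat.mul_add, ih]
    have h1 : 1 ≤ x ^ m := Nat.one_le_pow _ _ hx
    have : (x - 1) * x ^ m = x ^ (m + 1) - x ^ m := by
      rw [Nat.sub_mul, one_mul, pow_succ, mul_comm]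
    rw [this]
    have h2 : x ^ m ≤ x ^ (m + 1) := Nat.pow_le_pow_right hx (by omega)
    omega

lemma ck_one (k : ℕ) : ck k 1 = 2 ^ k - 1 := by
  have h := geom_nat 2 k (by norm_num)
  simpa [ck] using h

lemma ck_eq (k : ℕ) : (2 ^ k ^ 2 - 1) / (2 ^ k - 1) = ck k k := by
  have h2 : (1:ℕ) ≤ 2 ^ k := Nat.one_le_two_pow
  have hg := geom_nat (2 ^ k) k h2
  have hs : ∑ i ∈ Finset.range k, (2 ^ k) ^ i = ck k k := by
    simp [ck, ← pow_mul, mul_comm]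
  rw [hs] at hg
  have hk2 : (2:ℕ) ^ k ^ 2 = (2 ^ k) ^ k := by rw [← pow_mul, sq]
  rcases Nat.eq_or_lt_of_le h2 with h | h
  · have hk0 : k = 0 := by
      by_contra h0
      have : 2 ≤ 2 ^ k := by
        calc (2:ℕ) = 2 ^ 1 := rfl
          _ ≤ 2 ^ k := Nat.pow_le_pow_right (by norm_num) (by omega)
      omega
    subst hk0; simp [ck]
  · rw [hk2, ← hg, Nat.mul_div_cancel_left _ (by omega)]

lemma ck_modeq (k : ℕ) : ck k k ≡ k [MOD 2 ^ k - 1] := by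
  have hs : ck k k = ∑ i ∈ Finset.range k, (2 ^ k) ^ i := by
    simp [ck, ← pow_mul, mul_comm]
  rw [hs]
  have hone : (2:ℕ) ^ k ≡ 1 [MOD 2 ^ k - 1] := by
    have h2 : (1:ℕ) ≤ 2 ^ k := Nat.one_le_two_pow
    exact ((Nat.modEq_iff_dvd' h2).mpr dvd_rfl).symm
  have : ∀ m, (∑ i ∈ Finset.range m, (2 ^ k) ^ i) ≡ m [MOD 2 ^ k - 1] := by
    intro m
    induction m with
    | zero => simp [Nat.ModEq.refl]
    | succ m ih =>
      rw [Finset.sum_range_succ]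
      have hp : (2 ^ k) ^ m ≡ 1 [MOD 2 ^ k - 1] := by
        simpa using hone.pow m
      simpa using ih.add hp
  exact this k

/-- For `k ≥ 2`, the numbers `g₁ = 2^k - 1`, `g₂ = (2^k - 2)·(2^(k²) - 1)/(2^k - 1)`, and
`g₃ = (2^k - 1)·(2^(k²) - 1)/(2^k - 1)` are binary `k`'th powers, and
`gcd(g₁, g₂, g₃) = E_k = gcd(2^k - 1, k)`. -/
theorem gcd_three_binary_kth_powers (k : ℕ) (hk : 2 ≤ k) :
    IsBinaryKthPower k (2 ^ k - 1) ∧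
      IsBinaryKthPower k ((2 ^ k - 2) * ((2 ^ k ^ 2 - 1) / (2 ^ k - 1))) ∧
      IsBinaryKthPower k ((2 ^ k - 1) * ((2 ^ k ^ 2 - 1) / (2 ^ k - 1))) ∧
      Nat.gcd (2 ^ k - 1)
          (Nat.gcd ((2 ^ k - 2) * ((2 ^ k ^ 2 - 1) / (2 ^ k - 1)))
            ((2 ^ k - 1) * ((2 ^ k ^ 2 - 1) / (2 ^ k - 1)))) =
        Nat.gcd (2 ^ k - 1) k := by
  have h4 : (4:ℕ) ≤ 2 ^ k := by calc (4:ℕ) = 2^2 := rfl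
                                     _ ≤ 2 ^ k := Nat.pow_le_pow_right (by norm_num) hk
  have hck := ck_eq k
  have hck1 : ck k 1 = 2 ^ k - 1 := ck_one k
  have hpow : 2 ^ k = 2 * 2 ^ (k - 1) := by
    rw [← pow_succ']; congr 1; omega
  have h1 : (1:ℕ) ≤ 2 ^ (k-1) := Nat.one_le_two_pow
  refine ⟨⟨1, 1, le_refl 1, by norm_num, by norm_num, by simp [hck1]⟩, ?_, ?_, ?_⟩
  · exact ⟨k, 2 ^ k - 2, by omega, by omega, by omega, by rw [hck]⟩
  · exact ⟨k, 2 ^ k - 1, by omega, by omega, by omega, by rw [hck]⟩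
  · rw [Nat.gcd_mul_right]
    have hco : Nat.gcd (2 ^ k - 2) (2 ^ k - 1) = 1 := by
      have : 2 ^ k - 1 = 1 + (2 ^ k - 2) := by omega
      rw [this, Nat.gcd_add_self_right, Nat.gcd_one_right]
    rw [hco, one_mul, hck]
    have hmod : ck k k % (2 ^ k - 1) = k % (2 ^ k - 1) := ck_modeq k
    rw [Nat.gcd_rec, hmod, ← Nat.gcd_rec]
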